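/- arXiv:2308.16337 — 3 statements merged into one kernel-verified Lean document; each statement's English description precedes it below -/
import Mathlib

section
/- Let q ∈ ℝ with 0 ≤ q < 1, and let a, b : ℕ → ℂ satisfy Σ_n [n]_q! |a_n|² < ∞ and Σ_n [n]_q! |b_n|² < ∞. Then the series Σ_{n=0}^∞ [n]_q! · [n+1]_q · a_{n+1} · conj(b_n) and Σ_{n=1}^∞ [n]_q! · a_n · conj(b_{n−1}) converge absolutely and are equal; that is, ⟨R_q a, b⟩_{H_{2,q}} = ⟨a, M_z b⟩_{H_{2,q}}, so the adjoint of R_q in the q-Fock space H_{2,q} is the multiplication operator M_z. -/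
open Finset

/-- q-bracket `[n]_q = 1 + q + ⋯ + q^(n-1)` (real version). -/
noncomputable def qBracket (q : ℝ) (n : ℕ) : ℝ := ∑ j ∈ Finset.range n, q ^ j

/-- q-factorial `[n]_q! = [1]_q [2]_q ⋯ [n]_q`, with `[0]_q! = 1`. -/
noncomputable def qFact (q : ℝ) (n : ℕ) : ℝ := ∏ i ∈ Finset.range n, qBracket q (i + 1)

/-- The q-backward-shift on coefficient sequences: `(R_q a)_n = [n+1]_q a_(n+1)`. -/
noncomputable def Rq (q : ℝ) (a : ℕ → ℂ) : ℕ → ℂ := fun n => (qBracket q (n + 1) : ℂ) * a (n + 1)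

/-- Multiplication by `z` on coefficient sequences. -/
def Mz (b : ℕ → ℂ) : ℕ → ℂ := fun n => if n = 0 then 0 else b (n - 1)

lemma qBracket_nonneg (q : ℝ) (hq0 : 0 ≤ q) (n : ℕ) : 0 ≤ qBracket q n :=
  Finset.sum_nonneg fun i _ => pow_nonneg hq0 i

lemma qFact_nonneg (q : ℝ) (hq0 : 0 ≤ q) (n : ℕ) : 0 ≤ qFact q n :=
  Finset.prod_nonneg fun i _ => qBracket_nonneg q hq0 _

lemma qBracket_le (q : ℝ) (hq0 : 0 ≤ q) (hq1 : q < 1) (n : ℕ) :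
    qBracket q n ≤ (1 - q)⁻¹ := by
  have h := Summable.sum_le_tsum (Finset.range n) (fun i _ => pow_nonneg hq0 i)
    (summable_geometric_of_lt_one hq0 hq1)
  rwa [tsum_geometric_of_lt_one hq0 hq1] at h

lemma qFact_succ (q : ℝ) (n : ℕ) : qFact q (n + 1) = qFact q n * qBracket q (n + 1) := by
  simp [qFact, Finset.prod_range_succ]

/-- In the q-Fock space `H_{2,q}` (with inner product `⟨a,b⟩ = Σ_n [n]_q! a_n conj(b_n)`),
for `a, b` with `Σ [n]_q! |a_n|² < ∞`, `Σ [n]_q! |b_n|² < ∞`, the series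
`Σ_n [n]_q! [n+1]_q a_(n+1) conj(b_n)` and `Σ_{n≥1} [n]_q! a_n conj(b_(n-1))` converge
absolutely and coincide; i.e. `⟨R_q a, b⟩ = ⟨a, M_z b⟩`, so `R_q* = M_z` in `H_{2,q}`. -/
theorem Rq_adjoint_eq_Mz (q : ℝ) (hq0 : 0 ≤ q) (hq1 : q < 1) (a b : ℕ → ℂ)
    (ha : Summable fun n : ℕ => qFact q n * ‖a n‖ ^ 2)
    (hb : Summable fun n : ℕ => qFact q n * ‖b n‖ ^ 2) :
    Summable (fun n : ℕ => ‖(qFact q n : ℂ) * Rq q a n * (starRingEnd ℂ) (b n)‖) ∧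
    Summable (fun n : ℕ => ‖(qFact q n : ℂ) * a n * (starRingEnd ℂ) (Mz b n)‖) ∧
    ∑' n : ℕ, (qFact q n : ℂ) * Rq q a n * (starRingEnd ℂ) (b n)
      = ∑' n : ℕ, (qFact q n : ℂ) * a n * (starRingEnd ℂ) (Mz b n) := by
  set f : ℕ → ℂ := fun n => (qFact q n : ℂ) * Rq q a n * (starRingEnd ℂ) (b n) with hf
  set g : ℕ → ℂ := fun n => (qFact q n : ℂ) * a n * (starRingEnd ℂ) (Mz b n) with hg
  have hg0 : g 0 = 0 := by simp [hg, Mz]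
  have hgf : ∀ n : ℕ, g (n + 1) = f n := by
    intro n
    simp only [hg, hf, Mz, Rq, Nat.add_sub_cancel, if_neg (Nat.succ_ne_zero n),
      qFact_succ q n]
    push_cast
    ring
  -- bound on ‖f n‖
  have hbound : ∀ n : ℕ, ‖f n‖ ≤
      (qFact q (n + 1) * ‖a (n + 1)‖ ^ 2 + (1 - q)⁻¹ * (qFact q n * ‖b n‖ ^ 2)) / 2 := by
    intro n
    have hFn : (0:ℝ) ≤ qFact q n := qFact_nonneg q hq0 n
    have hF : (0:ℝ) ≤ qFact q (n + 1) := qFact_nonneg q hq0 (n + 1)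
    have h1 : ‖f n‖ = qFact q (n + 1) * (‖a (n + 1)‖ * ‖b n‖) := by
      simp only [hf, Rq, norm_mul, Complex.norm_real, RCLike.norm_conj,
        Real.norm_eq_abs, abs_of_nonneg hFn,
        abs_of_nonneg (qBracket_nonneg q hq0 (n + 1)), qFact_succ q n]
      ring
    rw [h1]
    have hAM : ‖a (n + 1)‖ * ‖b n‖ ≤ (‖a (n + 1)‖ ^ 2 + ‖b n‖ ^ 2) / 2 := by
      nlinarith [sq_nonneg (‖a (n + 1)‖ - ‖b n‖)]
    have h2 : qFact q (n + 1) * (‖a (n + 1)‖ * ‖b n‖)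
        ≤ qFact q (n + 1) * ((‖a (n + 1)‖ ^ 2 + ‖b n‖ ^ 2) / 2) :=
      mul_le_mul_of_nonneg_left hAM hF
    have h3 : qFact q (n + 1) * ‖b n‖ ^ 2 ≤ (1 - q)⁻¹ * (qFact q n * ‖b n‖ ^ 2) := by
      rw [qFact_succ q n]
      have := mul_le_mul_of_nonneg_right (qBracket_le q hq0 hq1 (n + 1))
        (mul_nonneg hFn (sq_nonneg ‖b n‖))
      nlinarith [this]
    nlinarith [h2, h3]
  have hsum_bound : Summable (fun n : ℕ =>
      (qFact q (n + 1) * ‖a (n + 1)‖ ^ 2 + (1 - q)⁻¹ * (qFact q n * ‖b n‖ ^ 2)) / 2) := by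
    apply Summable.div_const
    exact ((summable_nat_add_iff 1).2 ha).add (hb.mul_left _)
  have hSf : Summable (fun n : ℕ => ‖f n‖) :=
    Summable.of_nonneg_of_le (fun n => norm_nonneg _) hbound hsum_bound
  have hSg : Summable (fun n : ℕ => ‖g n‖) := by
    rw [← summable_nat_add_iff 1]
    simpa only [hgf] using hSf
  refine ⟨hSf, hSg, ?_⟩
  have hSg' : Summable g := hSg.of_norm
  rw [Summable.tsum_eq_zero_add hSg', hg0, zero_add]
  exact (tsum_congr hgf).symm
end

section
/- Let q ∈ ℝ with 0 ≤ q < 1 and let w : ℕ → ℝ with w_n > 0 for all n. Suppose that for all finitely supported sequences a, b : ℕ → ℂ one has Σ_n w_n (R_q a)_n conj(b_n) = Σ_n w_n a_n conj((M_z b)_n). Then w_n = w_0 · [n]_q! for every n ≥ 0. In other words, up to a positive multiplicative constant on the inner product, the q-Fock space H_{2,q} is the only weighted ℓ²-space of power series coefficients in which R_q* = M_z. -/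
open Finset

/-- Uniqueness: if a positive weight `w` on ℕ satisfies
`Σ_n w_n (R_q a)_n conj(b_n) = Σ_n w_n a_n conj((M_z b)_n)` for all finitely supported
`a, b`, then `w_n = w_0 [n]_q!`: up to a positive multiplicative constant, `H_{2,q}` is the
only weighted ℓ²-space of power series coefficients in which `R_q* = M_z`. -/
theorem qFock_unique_Rq_adjoint_Mz (q : ℝ) (hq0 : 0 ≤ q) (hq1 : q < 1)
    (w : ℕ → ℝ) (hw : ∀ n, 0 < w n)
    (hadj : ∀ a b : ℕ → ℂ, (Function.support a).Finite → (Function.support b).Finite →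
      ∑' n : ℕ, (w n : ℂ) * Rq q a n * (starRingEnd ℂ) (b n)
        = ∑' n : ℕ, (w n : ℂ) * a n * (starRingEnd ℂ) (Mz b n)) :
    ∀ n : ℕ, w n = w 0 * qFact q n := by
  have key : ∀ n : ℕ, w (n + 1) = w n * qBracket q (n + 1) := by
    intro n
    set a : ℕ → ℂ := fun m => if m = n + 1 then 1 else 0 with ha
    set b : ℕ → ℂ := fun m => if m = n then 1 else 0 with hb
    have hfa : (Function.support a).Finite :=
      Set.Finite.subset (Set.finite_singleton (n+1)) (by
        intro m hm; by_contra h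
        simp only [Set.mem_singleton_iff] at h
        exact hm (by simp [ha, h]))
    have hfb : (Function.support b).Finite :=
      Set.Finite.subset (Set.finite_singleton n) (by
        intro m hm; by_contra h
        simp only [Set.mem_singleton_iff] at h
        exact hm (by simp [hb, h]))
    have h := hadj a b hfa hfb
    have hL : (∑' m : ℕ, (w m : ℂ) * Rq q a m * (starRingEnd ℂ) (b m))
        = (w n : ℂ) * (qBracket q (n + 1) : ℂ) := by
      rw [tsum_eq_single n]
      · simp [Rq, ha, hb]
      · intro m hm
        simp only [Rq, ha, hb]
        rcases eq_or_ne m n with rfl | h'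
        · exact absurd rfl hm
        · simp [h']
    have hR : (∑' m : ℕ, (w m : ℂ) * a m * (starRingEnd ℂ) (Mz b m)) = (w (n+1) : ℂ) := by
      rw [tsum_eq_single (n+1)]
      · simp [Mz, ha, hb]
      · intro m hm
        simp only [ha]
        rcases eq_or_ne m (n+1) with rfl | h'
        · exact absurd rfl hm
        · simp [h']
    rw [hL, hR] at h
    exact_mod_cast h.symm
  intro n
  induction n with
  | zero => simp [qFact]
  | succ n ih =>
    rw [key n, ih]
    unfold qFact
    rw [Finset.prod_range_succ]
    ring
end

section
/- Let q ∈ ℝ with 0 ≤ q < 1, and let a, b : ℕ → ℂ satisfy Σ_n [n]_q! |a_n|² < ∞ and Σ_n [n]_q! |b_n|² < ∞. Then Σ_{n=0}^∞ [n]_q! · a_{n+1} · conj(b_n) = Σ_{n=1}^∞ [n]_q! · a_n · conj(b_{n−1}/[n]_q), both series converging absolutely; that is, the adjoint of the backward shift R_0 in H_{2,q} is the operator (I b)_n = b_{n−1}/[n]_q (for n ≥ 1, with (I b)_0 = 0), which is the q-Jackson integration operator sending z^ℓ to z^{ℓ+1}/[ℓ+1]_q. -/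
open Finset

/-- The backward shift `(R_0 a)_n = a_(n+1)`. -/
def R0 (a : ℕ → ℂ) : ℕ → ℂ := fun n => a (n + 1)

/-- The q-Jackson integration operator on coefficient sequences:
`(I b)_n = b_(n-1)/[n]_q` for `n ≥ 1`, `(I b)_0 = 0`; it sends `z^ℓ` to `z^(ℓ+1)/[ℓ+1]_q`. -/
noncomputable def Iq (q : ℝ) (b : ℕ → ℂ) : ℕ → ℂ :=
  fun n => if n = 0 then 0 else b (n - 1) / (qBracket q n : ℂ)

lemma one_le_qBracket (q : ℝ) (hq0 : 0 ≤ q) (n : ℕ) : 1 ≤ qBracket q (n + 1) := by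
  have : (1:ℝ) = q ^ 0 := by simp
  rw [qBracket, this]
  exact Finset.single_le_sum (f := fun j => q ^ j) (fun i _ => pow_nonneg hq0 i)
    (Finset.mem_range.mpr (Nat.succ_pos n))

lemma one_le_qFact (q : ℝ) (hq0 : 0 ≤ q) (n : ℕ) : 1 ≤ qFact q n := by
  induction n with
  | zero => simp [qFact]
  | succ k ih =>
    rw [qFact_succ]
    nlinarith [one_le_qBracket q hq0 k]
/-- In the q-Fock space `H_{2,q}` (inner product `⟨a,b⟩ = Σ_n [n]_q! a_n conj(b_n)`), for
`a, b` with `Σ [n]_q! |a_n|² < ∞`, `Σ [n]_q! |b_n|² < ∞`, the series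
`Σ_{n=0}^∞ [n]_q! a_(n+1) conj(b_n)` and `Σ_{n=1}^∞ [n]_q! a_n conj(b_(n-1)/[n]_q)` converge
absolutely and coincide: the adjoint of `R_0` in `H_{2,q}` is q-Jackson integration. -/
theorem R0_adjoint_eq_qJackson (q : ℝ) (hq0 : 0 ≤ q) (hq1 : q < 1) (a b : ℕ → ℂ)
    (ha : Summable fun n : ℕ => qFact q n * ‖a n‖ ^ 2)
    (hb : Summable fun n : ℕ => qFact q n * ‖b n‖ ^ 2) :
    Summable (fun n : ℕ => ‖(qFact q n : ℂ) * R0 a n * (starRingEnd ℂ) (b n)‖) ∧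
    Summable (fun n : ℕ => ‖(qFact q n : ℂ) * a n * (starRingEnd ℂ) (Iq q b n)‖) ∧
    ∑' n : ℕ, (qFact q n : ℂ) * R0 a n * (starRingEnd ℂ) (b n)
      = ∑' n : ℕ, (qFact q n : ℂ) * a n * (starRingEnd ℂ) (Iq q b n) := by
  have hBne : ∀ n : ℕ, ((qBracket q (n + 1) : ℝ) : ℂ) ≠ 0 := by
    intro n
    have := one_le_qBracket q hq0 n
    exact_mod_cast (by linarith : (qBracket q (n+1) : ℝ) ≠ 0)
  -- key pointwise identity
  have key : ∀ n : ℕ, (qFact q (n+1) : ℂ) * a (n+1) * (starRingEnd ℂ) (Iq q b (n+1))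
      = (qFact q n : ℂ) * a (n+1) * (starRingEnd ℂ) (b n) := by
    intro n
    simp only [Iq, Nat.succ_ne_zero, if_false, Nat.add_sub_cancel, map_div₀,
      Complex.conj_ofReal, qFact_succ]
    push_cast
    rw [div_eq_mul_inv]
    linear_combination ((qFact q n : ℂ) * a (n + 1) * (starRingEnd ℂ) (b n)) *
      mul_inv_cancel₀ (hBne n)
  -- first summability
  have hF1 : ∀ n, (1:ℝ) ≤ qFact q n := one_le_qFact q hq0
  have ha' : Summable fun n : ℕ => qFact q (n+1) * ‖a (n+1)‖ ^ 2 :=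
    (summable_nat_add_iff 1).2 ha
  have hsum1 : Summable (fun n : ℕ => ‖(qFact q n : ℂ) * R0 a n * (starRingEnd ℂ) (b n)‖) := by
    refine Summable.of_nonneg_of_le (fun n => norm_nonneg _) (fun n => ?_)
      ((ha'.add hb).div_const 2)
    have hF : (0:ℝ) ≤ qFact q n := le_trans zero_le_one (hF1 n)
    have hle : qFact q n ≤ qFact q (n+1) := by
      rw [qFact_succ]
      exact le_mul_of_one_le_right hF (one_le_qBracket q hq0 n)
    have hx : (0:ℝ) ≤ ‖a (n+1)‖ := norm_nonneg _
    have hy : (0:ℝ) ≤ ‖b n‖ := norm_nonneg _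
    simp only [R0, norm_mul, RCLike.norm_conj, Complex.norm_real,
      Real.norm_eq_abs, abs_of_nonneg hF]
    nlinarith [sq_nonneg (‖a (n+1)‖ - ‖b n‖)]
  -- second summability: terms shift
  have hnorm_eq : ∀ n : ℕ, ‖(qFact q (n+1) : ℂ) * a (n+1) * (starRingEnd ℂ) (Iq q b (n+1))‖
      = ‖(qFact q n : ℂ) * R0 a n * (starRingEnd ℂ) (b n)‖ := by
    intro n; rw [key n]; rfl
  have hsum2 : Summable (fun n : ℕ => ‖(qFact q n : ℂ) * a n * (starRingEnd ℂ) (Iq q b n)‖) := by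
    rw [← summable_nat_add_iff 1]
    exact hsum1.congr fun n => (hnorm_eq n).symm
  refine ⟨hsum1, hsum2, ?_⟩
  have hsumC2 : Summable (fun n : ℕ => (qFact q n : ℂ) * a n * (starRingEnd ℂ) (Iq q b n)) :=
    hsum2.of_norm
  rw [Summable.tsum_eq_zero_add hsumC2]
  have h0 : (qFact q 0 : ℂ) * a 0 * (starRingEnd ℂ) (Iq q b 0) = 0 := by simp [Iq]
  rw [h0, zero_add]
  exact tsum_congr fun n => (key n).symm
end
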